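/- Every 2×2 complex positive semidefinite Hermitian matrix A satisfies γ₊(A) = ‖A‖₁,₁. -/

import Mathlib

open Matrix ComplexOrder

/-- The ℓ¹ norm of a vector in ℂⁿ. -/
noncomputable def l1n {n : ℕ} (x : Fin n → ℂ) : ℝ := ∑ i, ‖x i‖

/-- The entrywise ℓ¹ norm ‖A‖₁,₁ of a matrix. -/
noncomputable def norm11 {n : ℕ} (A : Matrix (Fin n) (Fin n) ℂ) : ℝ :=
  ∑ i, ∑ j, ‖A i j‖

/-- The Frobenius norm of a matrix. -/
noncomputable def frobNorm {n : ℕ} (A : Matrix (Fin n) (Fin n) ℂ) : ℝ :=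
  Real.sqrt (∑ i, ∑ j, ‖A i j‖ ^ 2)

/-- γ₊(A): infimum of Σ ‖g_k‖₁² over finite decompositions A = Σ g_k g_k*. -/
noncomputable def gammaPlus {n : ℕ} (A : Matrix (Fin n) (Fin n) ℂ) : ℝ :=
  sInf {r : ℝ | ∃ (m : ℕ) (g : Fin m → Fin n → ℂ),
    A = ∑ k, vecMulVec (g k) (star (g k)) ∧ r = ∑ k, (l1n (g k)) ^ 2}

/-- γ(A): infimum of Σ ‖g_k‖₁‖h_k‖₁ over finite decompositions A = Σ g_k h_k*. -/
noncomputable def gammaCross {n : ℕ} (A : Matrix (Fin n) (Fin n) ℂ) : ℝ :=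
  sInf {r : ℝ | ∃ (m : ℕ) (g h : Fin m → Fin n → ℂ),
    A = ∑ k, vecMulVec (g k) (star (h k)) ∧ r = ∑ k, l1n (g k) * l1n (h k)}

/-- γ₀(A): infimum of γ₊(B) + γ₊(C) over decompositions A = B - C with B, C PSD. -/
noncomputable def gammaZero {n : ℕ} (A : Matrix (Fin n) (Fin n) ℂ) : ℝ :=
  sInf {r : ℝ | ∃ B C : Matrix (Fin n) (Fin n) ℂ, B.PosSemidef ∧ C.PosSemidef ∧
    A = B - C ∧ r = gammaPlus B + gammaPlus C}

lemma aux_decomp_apply {n m : ℕ} (g : Fin m → Fin n → ℂ) (i j : Fin n) :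
    (∑ k, vecMulVec (g k) (star (g k))) i j = ∑ k, g k i * (starRingEnd ℂ) (g k j) := by
  simp [Matrix.sum_apply, vecMulVec_apply, Complex.star_def]

lemma aux_norm11_le_cost {n m : ℕ} (g : Fin m → Fin n → ℂ) :
    norm11 (∑ k, vecMulVec (g k) (star (g k))) ≤ ∑ k, (l1n (g k)) ^ 2 := by
  unfold norm11 l1n
  have h1 : ∀ i j : Fin n, ‖(∑ k, vecMulVec (g k) (star (g k))) i j‖
      ≤ ∑ k, ‖g k i‖ * ‖g k j‖ := by
    intro i j
    rw [aux_decomp_apply]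
    refine (norm_sum_le _ _).trans_eq ?_
    refine Finset.sum_congr rfl fun k _ => ?_
    rw [norm_mul]
    simp
  calc ∑ i, ∑ j, ‖(∑ k, vecMulVec (g k) (star (g k))) i j‖
      ≤ ∑ i, ∑ j, ∑ k, ‖g k i‖ * ‖g k j‖ := by
        exact Finset.sum_le_sum fun i _ => Finset.sum_le_sum fun j _ => h1 i j
    _ = ∑ i, ∑ k, ∑ j, ‖g k i‖ * ‖g k j‖ := by
        exact Finset.sum_congr rfl fun i _ => Finset.sum_comm
    _ = ∑ k, ∑ i, ∑ j, ‖g k i‖ * ‖g k j‖ := Finset.sum_comm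
    _ = ∑ k, (∑ i, ‖g k i‖) ^ 2 := by
        refine Finset.sum_congr rfl fun k _ => ?_
        rw [sq, Finset.sum_mul_sum]

lemma aux_key (A : Matrix (Fin 2) (Fin 2) ℂ) (hA : A.PosSemidef)
    (h10 : A 1 0 = (starRingEnd ℂ) (A 0 1))
    (ha : A 0 0 = ((A 0 0).re : ℂ)) (hc : A 1 1 = ((A 1 1).re : ℂ)) :
    0 ≤ (A 1 1).re * ((A 0 0).re * (A 1 1).re - Complex.normSq (A 0 1)) := by
  have h := (posSemidef_iff_dotProduct_mulVec.mp hA).2 ![((A 1 1).re : ℂ), -(starRingEnd ℂ) (A 0 1)]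
  rw [Complex.le_def] at h
  simp only [dotProduct, mulVec, Fin.sum_univ_two] at h
  rw [h10] at h
  obtain ⟨h1, h2⟩ := h
  rw [ha, hc] at h1
  simp [Complex.normSq] at h1 ⊢
  nlinarith [h1]

lemma aux_offdiag_zero (A : Matrix (Fin 2) (Fin 2) ℂ) (hA : A.PosSemidef)
    (h10 : A 1 0 = (starRingEnd ℂ) (A 0 1))
    (ha : A 0 0 = ((A 0 0).re : ℂ)) (ha0 : 0 ≤ (A 0 0).re)
    (hc : A 1 1 = 0) :
    A 0 1 = 0 := by
  set ε : ℝ := 1 / ((A 0 0).re + 1) with hε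
  have hεpos : 0 < ε := by positivity
  have h := (posSemidef_iff_dotProduct_mulVec.mp hA).2 ![-(ε:ℂ) * A 0 1, 1]
  rw [Complex.le_def] at h
  simp only [dotProduct, mulVec, Fin.sum_univ_two] at h
  rw [h10, hc] at h
  obtain ⟨h1, -⟩ := h
  rw [ha] at h1
  set b := A 0 1
  simp at h1
  have hn : b.re * b.re + b.im * b.im = 0 := by
    by_contra hne
    have hpos : 0 < b.re * b.re + b.im * b.im := by
      rcases lt_or_eq_of_le (add_nonneg (mul_self_nonneg b.re) (mul_self_nonneg b.im)) with h | h
      · exact h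
      · exact absurd h.symm hne
    have hlt : ε * (A 0 0).re < 2 := by
      rw [hε, div_mul_eq_mul_div, div_lt_iff₀ (by positivity)]
      nlinarith
    have h2 : 0 ≤ ε * (ε * (A 0 0).re - 2) * (b.re * b.re + b.im * b.im) := by
      nlinarith [h1]
    nlinarith [mul_pos hεpos hpos]
  have : Complex.normSq b = 0 := by simpa [Complex.normSq] using hn
  exact Complex.normSq_eq_zero.mp this

lemma aux_main_construct (A : Matrix (Fin 2) (Fin 2) ℂ)
    (ha : A 0 0 = ((A 0 0).re : ℂ)) (ha0 : 0 ≤ (A 0 0).re)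
    (hc : A 1 1 = ((A 1 1).re : ℂ)) (hc0 : 0 < (A 1 1).re)
    (h10 : A 1 0 = (starRingEnd ℂ) (A 0 1))
    (key : 0 ≤ (A 1 1).re * ((A 0 0).re * (A 1 1).re - Complex.normSq (A 0 1))) :
    ∃ g : Fin 2 → Fin 2 → ℂ,
      A = ∑ k, vecMulVec (g k) (star (g k)) ∧ norm11 A = ∑ k, (l1n (g k)) ^ 2 := by
  set a := (A 0 0).re
  set c := (A 1 1).re
  set b := A 0 1 with hbdef
  set β := ‖b‖ with hβ
  set sc := Real.sqrt c with hsc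
  set ω : ℂ := if b = 0 then 1 else b / (β : ℂ) with hω
  set s1 := Real.sqrt (a - β ^ 2 / c) with hs1
  have hsc0 : 0 < sc := Real.sqrt_pos.mpr hc0
  have hscsq : sc * sc = c := Real.mul_self_sqrt hc0.le
  have hkey2 : 0 ≤ a - β ^ 2 / c := by
    rw [sub_nonneg, div_le_iff₀ hc0, hβ, Complex.sq_norm]
    nlinarith [key]
  have hs1sq : s1 * s1 = a - β ^ 2 / c := Real.mul_self_sqrt hkey2
  have hβ0 : 0 ≤ β := norm_nonneg b
  have hωb : (β : ℂ) * ω = b := by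
    rw [hω]
    split_ifs with h
    · simp [hβ, h]
    · rw [mul_div_cancel₀]
      simpa [hβ] using h
  have hωω : ω * (starRingEnd ℂ) ω = 1 := by
    rw [Complex.mul_conj, hω]
    split_ifs with h
    · simp
    · have hb0 : β ≠ 0 := by simpa [hβ] using h
      have : Complex.normSq (b / (β:ℂ)) = 1 := by
        rw [Complex.normSq_div, Complex.normSq_ofReal, hβ, Complex.normSq_eq_norm_sq]
        field_simp
      rw [this, Complex.ofReal_one]
  refine ⟨![![((β / sc : ℝ) : ℂ) * ω, (sc : ℂ)], ![(s1 : ℂ), 0]], ?_, ?_⟩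
  · ext i j
    fin_cases i <;> fin_cases j <;>
      simp only [Fin.zero_eta, Fin.mk_one, Fin.sum_univ_two, Matrix.sum_apply,
        vecMulVec_apply, Pi.star_apply, Matrix.cons_val_zero, Matrix.cons_val_one,
        Matrix.head_cons, Complex.star_def, _root_.map_mul, Complex.conj_ofReal, star_zero,
        mul_zero, zero_mul, add_zero, map_zero]
    · -- (0,0)
      rw [ha]
      rw [show (↑(β / sc) * ω) * (↑(β / sc) * (starRingEnd ℂ) ω)
          = (↑(β/sc) * ↑(β/sc)) * (ω * (starRingEnd ℂ) ω) by ring, hωω, mul_one,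
        ← Complex.ofReal_mul, ← Complex.ofReal_mul, hs1sq]
      push_cast
      norm_cast
      rw [div_mul_div_comm, hscsq]
      ring
    · -- (0,1)
      rw [show (↑(β / sc) * ω) * (sc:ℂ) = ↑(β / sc * sc) * ω by push_cast; ring,
        div_mul_cancel₀ _ hsc0.ne', hωb]
    · -- (1,0)
      rw [h10, ← hωb, _root_.map_mul, Complex.conj_ofReal,
        show (sc:ℂ) * (↑(β / sc) * (starRingEnd ℂ) ω) = ↑(β / sc * sc) * (starRingEnd ℂ) ω
          by push_cast; ring, div_mul_cancel₀ _ hsc0.ne']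
    · -- (1,1)
      rw [hc, ← Complex.ofReal_mul, hscsq]
  · have hωabs : ‖ω‖ = 1 := by
      rw [hω]; split_ifs with h
      · simp
      · have hb0 : β ≠ 0 := by simpa [hβ] using h
        rw [norm_div]
        simp [hβ, abs_of_nonneg hβ0]
        exact h
    have hl0 : l1n (![((β / sc : ℝ) : ℂ) * ω, (sc : ℂ)] : Fin 2 → ℂ) = β / sc + sc := by
      simp [l1n, Fin.sum_univ_two, _root_.map_mul, hωabs,
        abs_of_nonneg (div_nonneg hβ0 hsc0.le), abs_of_nonneg hβ0, abs_of_nonneg hsc0.le]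
    have hl1 : l1n (![(s1 : ℂ), 0] : Fin 2 → ℂ) = s1 := by
      simp [l1n, Fin.sum_univ_two, abs_of_nonneg (Real.sqrt_nonneg _), hs1]
    have hb10 : ‖A 1 0‖ = β := by rw [h10]; simp [hβ]
    have habs_a : ‖A 0 0‖ = a := by rw [ha]; simp [abs_of_nonneg ha0]
    have habs_c : ‖A 1 1‖ = c := by rw [hc]; simp [abs_of_nonneg hc0.le]
    rw [Fin.sum_univ_two]
    simp only [Matrix.cons_val_zero, Matrix.cons_val_one, Matrix.head_cons]
    rw [hl0, hl1]
    unfold norm11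
    rw [Fin.sum_univ_two, Fin.sum_univ_two, Fin.sum_univ_two, habs_a, habs_c, hb10, ← hbdef, ← hβ]
    have h2 : s1 ^ 2 = a - β ^ 2 / c := by rw [sq, hs1sq]
    have hsq : sc ^ 2 = c := by rw [sq, hscsq]
    have h3 : (β / sc + sc) ^ 2 = β ^ 2 / c + 2 * β + c := by
      rw [add_sq, div_pow, hsq, mul_assoc, div_mul_cancel₀ _ hsc0.ne']
    rw [h2, h3]
    ring


theorem stmt18 (A : Matrix (Fin 2) (Fin 2) ℂ) (hA : A.PosSemidef) :
    gammaPlus A = norm11 A := by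
  have h10 : A 1 0 = (starRingEnd ℂ) (A 0 1) := by
    have := congrFun (congrFun hA.1 1) 0
    simpa [conjTranspose_apply] using this.symm
  have hd0 : 0 ≤ (A 0 0).re ∧ (A 0 0).im = 0 := by
    have h := (posSemidef_iff_dotProduct_mulVec.mp hA).2 ![1, 0]
    rw [Complex.le_def] at h
    simp [dotProduct, mulVec, Fin.sum_univ_two] at h
    exact ⟨h.1, h.2.symm⟩
  have hd1 : 0 ≤ (A 1 1).re ∧ (A 1 1).im = 0 := by
    have h := (posSemidef_iff_dotProduct_mulVec.mp hA).2 ![0, 1]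
    rw [Complex.le_def] at h
    simp [dotProduct, mulVec, Fin.sum_univ_two] at h
    exact ⟨h.1, h.2.symm⟩
  have ha0 : 0 ≤ (A 0 0).re := hd0.1
  have hc0 : 0 ≤ (A 1 1).re := hd1.1
  have ha : A 0 0 = ((A 0 0).re : ℂ) := by
    rw [Complex.ext_iff]; simp [hd0.2]
  have hc : A 1 1 = ((A 1 1).re : ℂ) := by
    rw [Complex.ext_iff]; simp [hd1.2]
  have hmem : norm11 A ∈ {r : ℝ | ∃ (m : ℕ) (g : Fin m → Fin 2 → ℂ),
      A = ∑ k, vecMulVec (g k) (star (g k)) ∧ r = ∑ k, (l1n (g k)) ^ 2} := by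
    rcases lt_or_eq_of_le hc0 with hcpos | hczero
    · obtain ⟨g, hg1, hg2⟩ := aux_main_construct A ha ha0 hc hcpos h10
        (aux_key A hA h10 ha hc)
      exact ⟨2, g, hg1, hg2⟩
    · have hc' : A 1 1 = 0 := by rw [hc, ← hczero, Complex.ofReal_zero]
      have hb : A 0 1 = 0 := aux_offdiag_zero A hA h10 ha ha0 hc'
      have hb' : A 1 0 = 0 := by rw [h10, hb, map_zero]
      refine ⟨1, fun _ => ![(Real.sqrt (A 0 0).re : ℂ), 0], ?_, ?_⟩
      · ext i j
        simp only [Matrix.sum_apply, vecMulVec_apply]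
        fin_cases i <;> fin_cases j <;>
          simp [Fin.zero_eta, Fin.mk_one, vecMulVec_apply, hb, hb', hc', Complex.star_def,
            Complex.conj_ofReal, ← Complex.ofReal_mul, Real.mul_self_sqrt ha0]
        rw [ha]; simp
      · have : norm11 A = (A 0 0).re := by
          unfold norm11
          rw [Fin.sum_univ_two, Fin.sum_univ_two, Fin.sum_univ_two, hb, hb', hc', ha]
          simp [abs_of_nonneg ha0]
        rw [this]
        simp [l1n, Fin.sum_univ_two, Real.sq_sqrt ha0]
  have hlb : ∀ r ∈ {r : ℝ | ∃ (m : ℕ) (g : Fin m → Fin 2 → ℂ),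
      A = ∑ k, vecMulVec (g k) (star (g k)) ∧ r = ∑ k, (l1n (g k)) ^ 2}, norm11 A ≤ r := by
    rintro r ⟨m, g, hAg, rfl⟩
    rw [hAg]
    exact aux_norm11_le_cost g
  unfold gammaPlus
  exact le_antisymm (csInf_le ⟨norm11 A, hlb⟩ hmem) (le_csInf ⟨norm11 A, hmem⟩ hlb)
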